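/- Let ℓ be an odd positive integer and let p₁, p₂ be nonnegative reals with p₁ + p₂ = 1 and p₁ ≥ p₂. Then ∑_{i=(ℓ+1)/2}^{ℓ} C(ℓ,i)·(p₁^i·p₂^{ℓ−i} − p₁^{ℓ−i}·p₂^i) = C(ℓ,(ℓ+1)/2)·((ℓ+1)/2)·∫_{−(p₁−p₂)/2}^{(p₁−p₂)/2} (1/4 − t²)^{(ℓ−1)/2} dt. -/

import Mathlib

open scoped BigOperators

private noncomputable def hfun (k : ℕ) (x : ℝ) (i : ℕ) : ℝ :=
  ((2*k+1).choose i : ℝ) * i *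
    ((1/2+x)^(i-1)*(1/2-x)^(2*k+1-i) + (1/2+x)^(2*k+1-i)*(1/2-x)^(i-1))

private lemma term_deriv (k i : ℕ) (hi : 1 ≤ i) (hi2 : i ≤ 2*k+1) (x : ℝ) :
    HasDerivAt (fun x : ℝ => ((2*k+1).choose i : ℝ) *
      ((1/2+x)^i*(1/2-x)^(2*k+1-i) - (1/2+x)^(2*k+1-i)*(1/2-x)^i))
      (hfun k x i - hfun k x (i+1)) x := by
  have hu : HasDerivAt (fun x : ℝ => 1/2 + x) 1 x := (hasDerivAt_id x).const_add _
  have hv : HasDerivAt (fun x : ℝ => 1/2 - x) (-1) x := (hasDerivAt_id x).const_sub _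
  have hA := ((hu.fun_pow i).fun_mul (hv.fun_pow (2*k+1-i)))
  have hB := ((hu.fun_pow (2*k+1-i)).fun_mul (hv.fun_pow i))
  have hT := (hA.fun_sub hB).const_mul (((2*k+1).choose i : ℝ))
  convert hT using 1
  · rfl
  · rfl
  have hch : (((2*k+1).choose (i+1)) : ℝ) * ((i:ℝ)+1)
      = (((2*k+1).choose i) : ℝ) * (2*(k:ℝ)+1-(i:ℝ)) := by
    have h1 : (((2*k+1).choose (i+1) * (i+1) : ℕ) : ℝ)
        = (((2*k+1).choose i * (2*k+1-i) : ℕ) : ℝ) := by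
      exact_mod_cast congrArg (Nat.cast (R := ℝ)) (Nat.choose_succ_right_eq (2*k+1) i)
    push_cast [Nat.cast_sub hi2] at h1
    linear_combination h1
  simp only [hfun]
  rw [show (i+1) - 1 = i from rfl, show 2*k+1-(i+1) = 2*k+1-i-1 by omega]
  push_cast [Nat.cast_sub hi2]
  linear_combination (-((1/2+x)^i * (1/2-x)^(2*k+1-i-1)
    + (1/2+x)^(2*k+1-i-1) * (1/2-x)^i)) * hch

private lemma telescope (f : ℕ → ℝ) (a n : ℕ) :
    ∑ i ∈ Finset.Icc a (a + n), (f i - f (i+1)) = f a - f (a+n+1) := by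
  induction n with
  | zero => simp
  | succ n ih =>
      rw [show a+(n+1) = (a+n)+1 from rfl, Finset.sum_Icc_succ_top (by omega), ih]
      ring

private lemma sum_deriv (k : ℕ) (x : ℝ) :
    HasDerivAt (fun x : ℝ => ∑ i ∈ Finset.Icc (k+1) (2*k+1),
      ((2*k+1).choose i : ℝ) * ((1/2+x)^i*(1/2-x)^(2*k+1-i) - (1/2+x)^(2*k+1-i)*(1/2-x)^i))
      (((2*k+1).choose (k+1) : ℝ) * (((k:ℝ)+1) * (2 * (1/4 - x^2)^k))) x := by
  have hd : HasDerivAt (fun x : ℝ => ∑ i ∈ Finset.Icc (k+1) (2*k+1),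
      ((2*k+1).choose i : ℝ) * ((1/2+x)^i*(1/2-x)^(2*k+1-i) - (1/2+x)^(2*k+1-i)*(1/2-x)^i))
      (∑ i ∈ Finset.Icc (k+1) (2*k+1), (hfun k x i - hfun k x (i+1))) x :=
    HasDerivAt.fun_sum (fun i hi => by
      simp only [Finset.mem_Icc] at hi
      exact term_deriv k i (by omega) (by omega) x)
  convert hd using 1
  rw [show 2*k+1 = (k+1) + k by omega, telescope]
  have hz : hfun k x (k+1+k+1) = 0 := by
    simp [hfun, Nat.choose_eq_zero_of_lt (show 2*k+1 < k+1+k+1 by omega)]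
  rw [hz, sub_zero]
  simp only [hfun]
  rw [show (k+1)-1 = k from rfl, show 2*k+1-(k+1) = k by omega]
  have hm : (1/2+x)^k*(1/2-x)^k = (1/4 - x^2)^k := by
    rw [← mul_pow]; congr 1; ring
  push_cast
  rw [hm]
  ring

private lemma Fx (k : ℕ) (x : ℝ) :
    ∑ i ∈ Finset.Icc (k+1) (2*k+1), ((2*k+1).choose i : ℝ) *
      ((1/2+x)^i*(1/2-x)^(2*k+1-i) - (1/2+x)^(2*k+1-i)*(1/2-x)^i)
    = ((2*k+1).choose (k+1) : ℝ) * ((k:ℝ)+1) * ∫ t in (-x)..x, (1/4 - t^2)^k := by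
  have hcont : Continuous (fun t : ℝ => (1/4 - t^2)^k) := by fun_prop
  have hFTC := intervalIntegral.integral_eq_sub_of_hasDerivAt
    (f := fun x : ℝ => ∑ i ∈ Finset.Icc (k+1) (2*k+1),
      ((2*k+1).choose i : ℝ) * ((1/2+x)^i*(1/2-x)^(2*k+1-i) - (1/2+x)^(2*k+1-i)*(1/2-x)^i))
    (f' := fun t : ℝ => ((2*k+1).choose (k+1) : ℝ) * (((k:ℝ)+1) * (2 * (1/4 - t^2)^k)))
    (a := 0) (b := x)
    (fun t _ => sum_deriv k t)
    (Continuous.intervalIntegrable (by fun_prop) _ _)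
  have hF0 : ∑ i ∈ Finset.Icc (k+1) (2*k+1), ((2*k+1).choose i : ℝ) *
      ((1/2+(0:ℝ))^i*(1/2-0)^(2*k+1-i) - (1/2+(0:ℝ))^(2*k+1-i)*(1/2-0)^i) = 0 := by
    apply Finset.sum_eq_zero
    intro i _
    simp [mul_comm]
  rw [hF0, sub_zero] at hFTC
  rw [← hFTC]
  have hsplit : (∫ t in (-x)..(0:ℝ), (1/4 - t^2)^k) + ∫ t in (0:ℝ)..x, (1/4 - t^2)^k
      = ∫ t in (-x)..x, (1/4 - t^2)^k :=
    intervalIntegral.integral_add_adjacent_intervals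
      (hcont.intervalIntegrable _ _) (hcont.intervalIntegrable _ _)
  have heven : (∫ t in (-x)..(0:ℝ), (1/4 - t^2)^k) = ∫ t in (0:ℝ)..x, (1/4 - t^2)^k := by
    have := intervalIntegral.integral_comp_neg (a := (0:ℝ)) (b := x)
      (fun t : ℝ => (1/4 - t^2)^k)
    simp only [neg_zero] at this
    rw [← this]
    congr 1
    funext t
    rw [neg_sq]
  simp only [intervalIntegral.integral_const_mul]
  rw [← hsplit, heven]
  ring


/-- **The binary majority-probability gap as an integral.** For an odd positive `ℓ`
and `p₁ + p₂ = 1` with `p₁ ≥ p₂ ≥ 0`,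
`∑_{i=(ℓ+1)/2}^{ℓ} C(ℓ,i) (p₁^i p₂^{ℓ-i} - p₁^{ℓ-i} p₂^i)
  = C(ℓ,(ℓ+1)/2) ((ℓ+1)/2) ∫_{-(p₁-p₂)/2}^{(p₁-p₂)/2} (1/4 - t²)^{(ℓ-1)/2} dt`. -/
theorem binary_majority_gap_eq_integral (ℓ : ℕ) (hℓ : 0 < ℓ) (hodd : Odd ℓ)
    (p₁ p₂ : ℝ) (hp₁ : 0 ≤ p₁) (hp₂ : 0 ≤ p₂) (hsum : p₁ + p₂ = 1) (hge : p₂ ≤ p₁) :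
    ∑ i ∈ Finset.Icc ((ℓ + 1) / 2) ℓ,
        (ℓ.choose i : ℝ) * (p₁ ^ i * p₂ ^ (ℓ - i) - p₁ ^ (ℓ - i) * p₂ ^ i)
      = (ℓ.choose ((ℓ + 1) / 2) : ℝ) * (((ℓ + 1) / 2 : ℕ) : ℝ) *
        ∫ t in (-((p₁ - p₂) / 2))..((p₁ - p₂) / 2), (1 / 4 - t ^ 2) ^ ((ℓ - 1) / 2) := by
  obtain ⟨k, hk⟩ := hodd
  subst hk
  set x : ℝ := (p₁ - p₂) / 2 with hx
  have h1 : p₁ = 1/2 + x := by rw [hx]; linarith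
  have h2 : p₂ = 1/2 - x := by rw [hx]; linarith
  rw [show (2*k+1+1)/2 = k+1 by omega, show (2*k+1-1)/2 = k by omega, h1, h2]
  rw [Fx k x]
  push_cast
  ring
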